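/- Let q be a prime with q ≡ 1 (mod 4), a ∈ F_q with a² = -1, and let C be a self-dual [2n, n] code over F_q with generator matrix G whose rows are g_1, ..., g_n. For any scalars λ_1, ..., λ_n ∈ F_q, the code of length 2n+2 generated by the rows (g_i, λ_i a, λ_i) for odd i and (g_i, -λ_i, λ_i a) for even i is self-orthogonal. -/
import Mathlib


open Matrix

/-- The Euclidean dual of a linear code `C ⊆ F^ι`. -/
def dualCode {ι : Type*} [Fintype ι] (F : Type*) [Field F] (C : Submodule F (ι → F)) :
    Submodule F (ι → F) where
  carrier := {y | ∀ x ∈ C, ∑ i, x i * y i = 0}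
  zero_mem' := by intro x hx; simp
  add_mem' := by
    intro a b ha hb x hx
    simp [mul_add, Finset.sum_add_distrib, ha x hx, hb x hx]
  smul_mem' := by
    intro c a ha x hx
    simp only [Pi.smul_apply, smul_eq_mul, Set.mem_setOf_eq]
    calc ∑ i, x i * (c * a i) = c * ∑ i, x i * a i := by
          rw [Finset.mul_sum]; exact Finset.sum_congr rfl fun i _ => by ring
      _ = 0 := by rw [ha x hx, mul_zero]

/-- The linear code generated by a matrix `G` (its row space). -/
def rowSpan {κ ι F : Type*} [Field F] (G : Matrix κ ι F) : Submodule F (ι → F) :=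
  Submodule.span F (Set.range G)


/-- extending each row `gᵢ` of a generator matrix of a self-dual code over
`F_q` (`q ≡ 1 (mod 4)`, `a² = -1`) by `(λᵢa, λᵢ)` for odd rows and `(-λᵢ, λᵢa)` for even
rows yields a self-orthogonal code of length `2n+2`.  (Rows are numbered `1,…,n`, so the
row of index `i : Fin n` is odd-numbered iff `i.val` is even.) -/
theorem stmt_8 {q n : ℕ} [Fact (Nat.Prime q)] (hq : q % 4 = 1)
    (a : ZMod q) (ha : a ^ 2 = -1)
    (G : Matrix (Fin n) (Fin (2 * n)) (ZMod q))
    (hsd : rowSpan G = dualCode (ZMod q) (rowSpan G))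
    (lam : Fin n → ZMod q)
    (G' : Matrix (Fin n) (Fin (2 * n) ⊕ Fin 2) (ZMod q))
    (hG' : ∀ i, G' i = Sum.elim (G i)
      (if Even i.val then ![lam i * a, lam i] else ![-(lam i), lam i * a])) :
    rowSpan G' ≤ dualCode (ZMod q) (rowSpan G') := by
  -- pairwise orthogonality of the extended rows
  have key : ∀ i j, ∑ k, G' i k * G' j k = 0 := by
    intro i j
    have hGij : ∑ k, G i k * G j k = 0 := by
      have hj : G j ∈ dualCode (ZMod q) (rowSpan G) := by
        rw [← hsd]; exact Submodule.subset_span ⟨j, rfl⟩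
      exact hj (G i) (Submodule.subset_span ⟨i, rfl⟩)
    rw [hG' i, hG' j]
    rw [Fintype.sum_sum_type]
    simp only [Sum.elim_inl, Sum.elim_inr]
    rw [hGij] at *
    by_cases hi : Even i.val <;> by_cases hj : Even j.val <;>
      simp [hi, hj, Fin.sum_univ_two] <;>
      (first
        | linear_combination lam i * lam j * ha
        | ring)
  rw [rowSpan, Submodule.span_le]
  rintro _ ⟨j, rfl⟩
  intro x hx
  induction hx using Submodule.span_induction with
  | mem x hxm =>
    obtain ⟨i, rfl⟩ := hxm
    exact key i j
  | zero => simp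
  | add x y _ _ hx hy =>
    simp [add_mul, Finset.sum_add_distrib, hx, hy]
  | smul c x _ hx =>
    have : ∑ k, (c • x) k * G' j k = c * ∑ k, x k * G' j k := by
      rw [Finset.mul_sum]; exact Finset.sum_congr rfl fun k _ => by
        simp [mul_assoc]
    rw [this, hx, mul_zero]
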